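/- For any finite simple graph G on n ≥ 2 vertices, ρ_T(G) ≤ n − 1. -/
import Mathlib


/-- A min-plus `k`-tropical dot product representation of `G` with threshold `t`:
distinct vertices `x, y` are adjacent iff `min_{1 ≤ i ≤ k} (f(x)_i + f(y)_i) ≥ t`
(equivalently, every coordinate sum is at least `t`). -/
def MinPlusRep {V : Type*} (G : SimpleGraph V) (k : ℕ) (f : V → Fin k → ℝ) (t : ℝ) : Prop :=
  0 < t ∧ ∀ x y : V, x ≠ y → (G.Adj x y ↔ ∀ i : Fin k, t ≤ f x i + f y i)

/-- The min-plus tropical dot product dimension `ρ_T(G)`. -/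
noncomputable def rhoT {V : Type*} (G : SimpleGraph V) : ℕ :=
  sInf {k : ℕ | 0 < k ∧ ∃ (f : V → Fin k → ℝ) (t : ℝ), MinPlusRep G k f t}

/-- For any finite simple graph on `n ≥ 2` vertices, `ρ_T(G) ≤ n − 1`. -/
theorem stmt_2 {V : Type*} [Fintype V] (G : SimpleGraph V) (hn : 2 ≤ Fintype.card V) :
    rhoT G ≤ Fintype.card V - 1 := by
  classical
  have hV : Nonempty V := Fintype.card_pos_iff.mp (by omega)
  obtain ⟨v0⟩ := hV
  have hcard : Fintype.card {v : V // v ≠ v0} = Fintype.card V - 1 := by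
    simp [Fintype.card_subtype_compl]
  set e : Fin (Fintype.card V - 1) ≃ {v : V // v ≠ v0} :=
    (Fintype.equivFinOfCardEq hcard).symm with he
  set g : V → V → ℝ := fun u x => if x = u then 0 else if G.Adj u x then 2 else 1/2 with hg
  have hglb : ∀ u x : V, x ≠ u → (1:ℝ)/2 ≤ g u x := by
    intro u x hxu
    simp only [hg, if_neg hxu]
    split_ifs <;> norm_num
  apply Nat.sInf_le
  refine ⟨by omega, fun x i => g (e i) x, 1, one_pos, fun x y hxy => ?_⟩
  constructor
  · intro hadj i
    set u : V := (e i : V) with hu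
    by_cases hux : x = u
    · have hyu : y ≠ u := hux ▸ hxy.symm
      have : g u y = 2 := by
        simp only [hg, if_neg hyu, if_pos (hux ▸ hadj)]
      simp only [hg]
      rw [if_pos hux]
      simp only [hg] at this
      rw [this]; norm_num
    · by_cases huy : y = u
      · have : g u x = 2 := by
          simp only [hg, if_neg hux, if_pos (huy ▸ hadj.symm)]
        simp only [hg] at this ⊢
        rw [if_pos huy, this]; norm_num
      · have h1 := hglb u x hux
        have h2 := hglb u y huy
        linarith
  · intro h
    by_contra hadj
    by_cases hx : x ≠ v0
    · have hi := h (e.symm ⟨x, hx⟩)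
      have hex : ((e (e.symm ⟨x, hx⟩)) : V) = x := by simp
      simp only [hex] at hi
      have h1 : g x x = 0 := by simp [hg]
      have h2 : g x y = 1/2 := by
        simp only [hg, if_neg (Ne.symm hxy), if_neg hadj]
      rw [h1, h2] at hi; norm_num at hi
    · push_neg at hx
      have hy : y ≠ v0 := by rw [← hx]; exact hxy.symm
      have hi := h (e.symm ⟨y, hy⟩)
      have hex : ((e (e.symm ⟨y, hy⟩)) : V) = y := by simp
      simp only [hex] at hi
      have h1 : g y y = 0 := by simp [hg]
      have h2 : g y x = 1/2 := by
        simp only [hg, if_neg hxy, if_neg (fun h' : G.Adj y x => hadj h'.symm)]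
      rw [h1, h2] at hi; norm_num at hi
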